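/- Let T > 0, let D ⊆ ℝ^d be a Borel set, let ρ : ℝ^d × ℝ^d → [0,∞) be measurable with ρ(x,·) a probability density for each x and ρ(x,y) ≤ c̃ ρ̃(y−x) for a probability density ρ̃ on ℝ^d and a constant c̃, and let w₀ : ℝ^d → [0,∞) be a bounded integrable function vanishing outside D. Then there exists exactly one measurable function u : ℝ^d × [0,T] → [0,∞), bounded on ℝ^d × [0,T] and with u(·,t) integrable for each t, such that u(x,t) = 0 for all x ∉ D and t ∈ [0,T], and u(x,t) = w₀(x) + ∫₀ᵗ ∫_{ℝ^d} u(y,s) ρ(y,x) dy ds for all x ∈ D and t ∈ [0,T]. -/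

import Mathlib

open MeasureTheory Set

/-- `u` solves the linear nonlocal growth equation on the fixed domain `D` up to
time `T`, with absorption outside `D` and initial condition `w₀`. -/
def IsNonlocalGrowthSolution {d : ℕ} (T : ℝ) (D : Set (EuclideanSpace ℝ (Fin d)))
    (ρ : EuclideanSpace ℝ (Fin d) → EuclideanSpace ℝ (Fin d) → ℝ)
    (w₀ : EuclideanSpace ℝ (Fin d) → ℝ)
    (u : EuclideanSpace ℝ (Fin d) → ℝ → ℝ) : Prop :=
  Measurable (Function.uncurry u) ∧
  (∀ x, ∀ t ∈ Icc (0:ℝ) T, 0 ≤ u x t) ∧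
  (∃ C : ℝ, ∀ x, ∀ t ∈ Icc (0:ℝ) T, u x t ≤ C) ∧
  (∀ t ∈ Icc (0:ℝ) T, Integrable fun x => u x t) ∧
  (∀ x ∉ D, ∀ t ∈ Icc (0:ℝ) T, u x t = 0) ∧
  (∀ x ∈ D, ∀ t ∈ Icc (0:ℝ) T, u x t = w₀ x + ∫ s in (0:ℝ)..t, ∫ y, u y s * ρ y x)

open Function
open scoped Nat ENNReal NNReal

lemma aux_measurable_tsum {α : Type*} [MeasurableSpace α] {F : ℕ → α → ℝ}
    (hmeas : ∀ i, Measurable (F i)) (hnn : ∀ i x, 0 ≤ F i x) :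
    Measurable fun x => ∑' i, F i x := by
  have h : (fun x => ∑' i, F i x) = fun x => ((∑' i, (F i x).toNNReal : ℝ≥0) : ℝ) := by
    funext x
    rw [NNReal.coe_tsum]
    congr 1
    funext i
    simp [Real.coe_toNNReal _ (hnn i x)]
  rw [h]
  exact (Measurable.nnreal_tsum fun i => (hmeas i).real_toNNReal).coe_nnreal_real

lemma aux_integrable_tsum {α : Type*} [MeasurableSpace α] {μ : Measure α} {F : ℕ → α → ℝ}
    (hmeas : ∀ i, Measurable (F i)) (hnn : ∀ i x, 0 ≤ F i x)
    (hint : ∀ i, Integrable (F i) μ) (hsum : Summable fun i => ∫ x, F i x ∂μ) :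
    Integrable (fun x => ∑' i, F i x) μ := by
  refine ⟨(aux_measurable_tsum hmeas hnn).aestronglyMeasurable, ?_⟩
  rw [hasFiniteIntegral_iff_norm]
  have h1 : ∀ x, ENNReal.ofReal ‖∑' i, F i x‖ ≤ ∑' i, ENNReal.ofReal (F i x) := by
    intro x
    rw [Real.norm_of_nonneg (tsum_nonneg fun i => hnn i x)]
    by_cases hs : Summable fun i => F i x
    · rw [ENNReal.ofReal_tsum_of_nonneg (fun i => hnn i x) hs]
    · rw [tsum_eq_zero_of_not_summable hs]
      simp
  calc ∫⁻ x, ENNReal.ofReal ‖∑' i, F i x‖ ∂μ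
      ≤ ∫⁻ x, ∑' i, ENNReal.ofReal (F i x) ∂μ := lintegral_mono h1
    _ = ∑' i, ∫⁻ x, ENNReal.ofReal (F i x) ∂μ :=
        lintegral_tsum fun i => ((hmeas i).ennreal_ofReal).aemeasurable
    _ = ∑' i, ENNReal.ofReal (∫ x, F i x ∂μ) := by
        congr 1; funext i
        rw [← ofReal_integral_eq_lintegral_ofReal (hint i) (Filter.Eventually.of_forall (hnn i))]
    _ = ENNReal.ofReal (∑' i, ∫ x, F i x ∂μ) := by
        rw [ENNReal.ofReal_tsum_of_nonneg (fun i => integral_nonneg (hnn i)) hsum]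
    _ < ⊤ := ENNReal.ofReal_lt_top

/-! ### Auxiliary lemmas about the kernel `ρ` -/

section kernel
variable {d : ℕ}

lemma aux_col_meas {ρ : EuclideanSpace ℝ (Fin d) → EuclideanSpace ℝ (Fin d) → ℝ}
    (hρ_meas : Measurable (Function.uncurry ρ)) (x : EuclideanSpace ℝ (Fin d)) :
    Measurable fun y => ρ y x :=
  hρ_meas.comp (measurable_id.prodMk measurable_const)

lemma aux_col_int {ρ : EuclideanSpace ℝ (Fin d) → EuclideanSpace ℝ (Fin d) → ℝ}
    {ρt : EuclideanSpace ℝ (Fin d) → ℝ} {c : ℝ}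
    (hρ_meas : Measurable (Function.uncurry ρ)) (hρ_nonneg : ∀ x y, 0 ≤ ρ x y)
    (hρt_int : Integrable ρt) (hdom : ∀ x y, ρ x y ≤ c * ρt (y - x))
    (x : EuclideanSpace ℝ (Fin d)) : Integrable fun y => ρ y x := by
  refine Integrable.mono' (((integrable_comp_sub_left ρt x).2 hρt_int).const_mul c)
    (aux_col_meas hρ_meas x).aestronglyMeasurable ?_
  filter_upwards with y
  rw [Real.norm_of_nonneg (hρ_nonneg y x)]
  exact hdom y x

lemma aux_col_le {ρ : EuclideanSpace ℝ (Fin d) → EuclideanSpace ℝ (Fin d) → ℝ}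
    {ρt : EuclideanSpace ℝ (Fin d) → ℝ} {c : ℝ}
    (hρ_meas : Measurable (Function.uncurry ρ)) (hρ_nonneg : ∀ x y, 0 ≤ ρ x y)
    (hρt_int : Integrable ρt) (hρt_prob : ∫ z, ρt z = 1)
    (hdom : ∀ x y, ρ x y ≤ c * ρt (y - x))
    (x : EuclideanSpace ℝ (Fin d)) : ∫ y, ρ y x ≤ c := by
  calc ∫ y, ρ y x ≤ ∫ y, c * ρt (x - y) :=
        integral_mono (aux_col_int hρ_meas hρ_nonneg hρt_int hdom x)
          (((integrable_comp_sub_left ρt x).2 hρt_int).const_mul c) (fun y => hdom y x)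
    _ = c * ∫ y, ρt (x - y) := integral_const_mul _ _
    _ = c := by rw [integral_sub_left_eq_self ρt volume x, hρt_prob, mul_one]

lemma aux_prod_int {ρ : EuclideanSpace ℝ (Fin d) → EuclideanSpace ℝ (Fin d) → ℝ}
    {ρt : EuclideanSpace ℝ (Fin d) → ℝ} {c : ℝ} {f : EuclideanSpace ℝ (Fin d) → ℝ} {M : ℝ}
    (hρ_meas : Measurable (Function.uncurry ρ)) (hρ_nonneg : ∀ x y, 0 ≤ ρ x y)
    (hρt_int : Integrable ρt) (hdom : ∀ x y, ρ x y ≤ c * ρt (y - x))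
    (hf_meas : Measurable f) (hf_nonneg : ∀ y, 0 ≤ f y) (hf_le : ∀ y, f y ≤ M)
    (x : EuclideanSpace ℝ (Fin d)) : Integrable fun y => f y * ρ y x := by
  have hM : 0 ≤ M := le_trans (hf_nonneg 0) (hf_le 0)
  refine Integrable.mono' ((((integrable_comp_sub_left ρt x).2 hρt_int).const_mul c).const_mul M)
    (hf_meas.mul (aux_col_meas hρ_meas x)).aestronglyMeasurable ?_
  filter_upwards with y
  rw [Real.norm_of_nonneg (mul_nonneg (hf_nonneg y) (hρ_nonneg y x))]
  exact mul_le_mul (hf_le y) (hdom y x) (hρ_nonneg y x) hM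

lemma aux_prod_le {ρ : EuclideanSpace ℝ (Fin d) → EuclideanSpace ℝ (Fin d) → ℝ}
    {ρt : EuclideanSpace ℝ (Fin d) → ℝ} {c : ℝ} {f : EuclideanSpace ℝ (Fin d) → ℝ} {M : ℝ}
    (hρ_meas : Measurable (Function.uncurry ρ)) (hρ_nonneg : ∀ x y, 0 ≤ ρ x y)
    (hρt_int : Integrable ρt) (hρt_prob : ∫ z, ρt z = 1)
    (hdom : ∀ x y, ρ x y ≤ c * ρt (y - x))
    (hf_meas : Measurable f) (hf_nonneg : ∀ y, 0 ≤ f y) (hf_le : ∀ y, f y ≤ M)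
    (x : EuclideanSpace ℝ (Fin d)) : ∫ y, f y * ρ y x ≤ M * c := by
  have hM : 0 ≤ M := le_trans (hf_nonneg 0) (hf_le 0)
  calc ∫ y, f y * ρ y x ≤ ∫ y, M * ρ y x := by
        refine integral_mono (aux_prod_int hρ_meas hρ_nonneg hρt_int hdom
            hf_meas hf_nonneg hf_le x)
          ((aux_col_int hρ_meas hρ_nonneg hρt_int hdom x).const_mul M) (fun y => ?_)
        exact mul_le_mul_of_nonneg_right (hf_le y) (hρ_nonneg y x)
    _ = M * ∫ y, ρ y x := integral_const_mul _ _
    _ ≤ M * c := mul_le_mul_of_nonneg_left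
        (aux_col_le hρ_meas hρ_nonneg hρt_int hρt_prob hdom x) hM

lemma aux_out_meas {ρ : EuclideanSpace ℝ (Fin d) → EuclideanSpace ℝ (Fin d) → ℝ}
    {f : EuclideanSpace ℝ (Fin d) → ℝ}
    (hρ_meas : Measurable (Function.uncurry ρ)) (hf_meas : Measurable f) :
    Measurable fun x => ∫ y, f y * ρ y x := by
  have h : Measurable (uncurry fun x y : EuclideanSpace ℝ (Fin d) => f y * ρ y x) :=
    (hf_meas.comp measurable_snd).mul (hρ_meas.comp measurable_swap)
  exact h.stronglyMeasurable.integral_prod_right'.measurable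

lemma aux_uncurry_int {ρ : EuclideanSpace ℝ (Fin d) → EuclideanSpace ℝ (Fin d) → ℝ}
    {f : EuclideanSpace ℝ (Fin d) → ℝ}
    (hρ_meas : Measurable (Function.uncurry ρ)) (hρ_nonneg : ∀ x y, 0 ≤ ρ x y)
    (hρ_int : ∀ x, Integrable (ρ x)) (hρ_prob : ∀ x, ∫ y, ρ x y = 1)
    (hf_meas : Measurable f) (hf_nonneg : ∀ y, 0 ≤ f y) (hf_int : Integrable f) :
    Integrable (uncurry fun x y : EuclideanSpace ℝ (Fin d) => f y * ρ y x)
      (volume.prod volume) := by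
  have hmeas : Measurable (uncurry fun x y : EuclideanSpace ℝ (Fin d) => f y * ρ y x) :=
    (hf_meas.comp measurable_snd).mul (hρ_meas.comp measurable_swap)
  rw [integrable_prod_iff' hmeas.aestronglyMeasurable]
  constructor
  · filter_upwards with y
    exact (hρ_int y).const_mul (f y)
  · apply hf_int.congr
    filter_upwards with y
    simp only [uncurry]
    have h1 : ∀ x, ‖f y * ρ y x‖ = f y * ρ y x := fun x =>
      Real.norm_of_nonneg (mul_nonneg (hf_nonneg y) (hρ_nonneg y x))
    calc f y = f y * ∫ x, ρ y x := by rw [hρ_prob y, mul_one]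
      _ = ∫ x, f y * ρ y x := (integral_const_mul _ _).symm
      _ = ∫ x, ‖f y * ρ y x‖ := by simp_rw [h1]

lemma aux_int_integral {ρ : EuclideanSpace ℝ (Fin d) → EuclideanSpace ℝ (Fin d) → ℝ}
    {f : EuclideanSpace ℝ (Fin d) → ℝ}
    (hρ_meas : Measurable (Function.uncurry ρ)) (hρ_nonneg : ∀ x y, 0 ≤ ρ x y)
    (hρ_int : ∀ x, Integrable (ρ x)) (hρ_prob : ∀ x, ∫ y, ρ x y = 1)
    (hf_meas : Measurable f) (hf_nonneg : ∀ y, 0 ≤ f y) (hf_int : Integrable f) :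
    Integrable (fun x => ∫ y, f y * ρ y x) ∧ ∫ x, ∫ y, f y * ρ y x = ∫ y, f y := by
  have huncurry := aux_uncurry_int hρ_meas hρ_nonneg hρ_int hρ_prob hf_meas hf_nonneg hf_int
  constructor
  · exact huncurry.integral_prod_left
  · rw [integral_integral_swap huncurry]
    calc ∫ y, ∫ x, f y * ρ y x = ∫ y, f y * ∫ x, ρ y x := by
          congr 1; funext y; exact integral_const_mul _ _
      _ = ∫ y, f y := by congr 1; funext y; rw [hρ_prob y, mul_one]

end kernel

/-! ### The Picard iteration -/

noncomputable def nlgIter {d : ℕ} (D : Set (EuclideanSpace ℝ (Fin d)))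
    (ρ : EuclideanSpace ℝ (Fin d) → EuclideanSpace ℝ (Fin d) → ℝ)
    (w₀ : EuclideanSpace ℝ (Fin d) → ℝ) : ℕ → EuclideanSpace ℝ (Fin d) → ℝ
  | 0 => w₀
  | n + 1 => D.indicator fun x => ∫ y, nlgIter D ρ w₀ n y * ρ y x

lemma nlgIter_props {d : ℕ} {D : Set (EuclideanSpace ℝ (Fin d))} (hD : MeasurableSet D)
    {ρ : EuclideanSpace ℝ (Fin d) → EuclideanSpace ℝ (Fin d) → ℝ}
    {ρt : EuclideanSpace ℝ (Fin d) → ℝ} {c : ℝ} {w₀ : EuclideanSpace ℝ (Fin d) → ℝ} {C₀ : ℝ}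
    (hρ_meas : Measurable (Function.uncurry ρ)) (hρ_nonneg : ∀ x y, 0 ≤ ρ x y)
    (hρ_int : ∀ x, Integrable (ρ x)) (hρ_prob : ∀ x, ∫ y, ρ x y = 1)
    (hρt_int : Integrable ρt) (hρt_prob : ∫ z, ρt z = 1)
    (hdom : ∀ x y, ρ x y ≤ c * ρt (y - x)) (hc0 : 0 ≤ c)
    (hw₀_meas : Measurable w₀) (hw₀_nonneg : ∀ x, 0 ≤ w₀ x) (hw₀_int : Integrable w₀)
    (hC₀0 : 0 ≤ C₀) (hC₀ : ∀ x, w₀ x ≤ C₀) :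
    ∀ n : ℕ, Measurable (nlgIter D ρ w₀ n) ∧ (∀ x, 0 ≤ nlgIter D ρ w₀ n x) ∧
      (∀ x, nlgIter D ρ w₀ n x ≤ C₀ * c ^ n) ∧ Integrable (nlgIter D ρ w₀ n) ∧
      ∫ x, nlgIter D ρ w₀ n x ≤ ∫ x, w₀ x := by
  intro n
  induction n with
  | zero =>
    refine ⟨hw₀_meas, hw₀_nonneg, fun x => ?_, hw₀_int, le_refl _⟩
    simpa [nlgIter] using hC₀ x
  | succ n ih =>
    obtain ⟨hmeas, hnn, hle, hint, hI⟩ := ih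
    have hII := aux_int_integral hρ_meas hρ_nonneg hρ_int hρ_prob hmeas hnn hint
    have hgnn : ∀ x, 0 ≤ ∫ y, nlgIter D ρ w₀ n y * ρ y x := fun x =>
      integral_nonneg fun y => mul_nonneg (hnn y) (hρ_nonneg y x)
    have hstep : nlgIter D ρ w₀ (n + 1)
        = D.indicator fun x => ∫ y, nlgIter D ρ w₀ n y * ρ y x := rfl
    refine ⟨?_, ?_, ?_, ?_, ?_⟩
    · rw [hstep]
      exact (aux_out_meas hρ_meas hmeas).indicator hD
    · intro x
      rw [hstep]
      exact Set.indicator_nonneg (fun x _ => hgnn x) x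
    · intro x
      rw [hstep]
      by_cases hx : x ∈ D
      · rw [Set.indicator_of_mem hx]
        calc ∫ y, nlgIter D ρ w₀ n y * ρ y x ≤ (C₀ * c ^ n) * c :=
              aux_prod_le hρ_meas hρ_nonneg hρt_int hρt_prob hdom hmeas hnn hle x
          _ = C₀ * c ^ (n + 1) := by ring
      · rw [Set.indicator_of_notMem hx]
        positivity
    · rw [hstep]
      exact hII.1.indicator hD
    · rw [hstep]
      calc ∫ x, D.indicator (fun x => ∫ y, nlgIter D ρ w₀ n y * ρ y x) x
          ≤ ∫ x, ∫ y, nlgIter D ρ w₀ n y * ρ y x := by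
            refine integral_mono (hII.1.indicator hD) hII.1 (fun x => ?_)
            exact Set.indicator_le_self' (fun x _ => hgnn x) x
        _ = ∫ y, nlgIter D ρ w₀ n y := hII.2
        _ ≤ ∫ x, w₀ x := hI

lemma aux_unique {d : ℕ} {T : ℝ} (hT : 0 < T) {D : Set (EuclideanSpace ℝ (Fin d))}
    {ρ : EuclideanSpace ℝ (Fin d) → EuclideanSpace ℝ (Fin d) → ℝ}
    {ρt : EuclideanSpace ℝ (Fin d) → ℝ} {c : ℝ} {w₀ : EuclideanSpace ℝ (Fin d) → ℝ}
    (hρ_meas : Measurable (Function.uncurry ρ)) (hρ_nonneg : ∀ x y, 0 ≤ ρ x y)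
    (hρt_int : Integrable ρt) (hρt_prob : ∫ z, ρt z = 1)
    (hdom : ∀ x y, ρ x y ≤ c * ρt (y - x)) (hc0 : 0 ≤ c)
    (v₁ v₂ : EuclideanSpace ℝ (Fin d) → ℝ → ℝ)
    (h₁ : IsNonlocalGrowthSolution T D ρ w₀ v₁) (h₂ : IsNonlocalGrowthSolution T D ρ w₀ v₂) :
    ∀ x, ∀ t ∈ Icc (0:ℝ) T, v₁ x t = v₂ x t := by
  obtain ⟨hm₁, hnn₁, ⟨C₁, hb₁⟩, hint₁, hvan₁, heq₁⟩ := h₁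
  obtain ⟨hm₂, hnn₂, ⟨C₂, hb₂⟩, hint₂, hvan₂, heq₂⟩ := h₂
  have h0T : (0:ℝ) ∈ Icc (0:ℝ) T := ⟨le_refl 0, hT.le⟩
  have hC₁0 : 0 ≤ C₁ := (hnn₁ 0 0 h0T).trans (hb₁ 0 0 h0T)
  have hC₂0 : 0 ≤ C₂ := (hnn₂ 0 0 h0T).trans (hb₂ 0 0 h0T)
  set M : ℝ := C₁ + C₂ with hM
  have hM0 : 0 ≤ M := by positivity
  -- basic integrability facts for each solution
  have hvmeas₁ : ∀ s : ℝ, Measurable fun y => v₁ y s := fun s =>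
    hm₁.comp (measurable_id.prodMk measurable_const)
  have hvmeas₂ : ∀ s : ℝ, Measurable fun y => v₂ y s := fun s =>
    hm₂.comp (measurable_id.prodMk measurable_const)
  have hprodint₁ : ∀ s ∈ Icc (0:ℝ) T, ∀ x, Integrable fun y => v₁ y s * ρ y x := fun s hs x =>
    aux_prod_int hρ_meas hρ_nonneg hρt_int hdom (hvmeas₁ s) (fun y => hnn₁ y s hs)
      (fun y => hb₁ y s hs) x
  have hprodint₂ : ∀ s ∈ Icc (0:ℝ) T, ∀ x, Integrable fun y => v₂ y s * ρ y x := fun s hs x =>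
    aux_prod_int hρ_meas hρ_nonneg hρt_int hdom (hvmeas₂ s) (fun y => hnn₂ y s hs)
      (fun y => hb₂ y s hs) x
  have hgmeas₁ : ∀ x, Measurable fun s : ℝ => ∫ y, v₁ y s * ρ y x := by
    intro x
    have h : Measurable (uncurry fun (s : ℝ) (y : EuclideanSpace ℝ (Fin d)) =>
        v₁ y s * ρ y x) :=
      (hm₁.comp (measurable_snd.prodMk measurable_fst)).mul
        ((aux_col_meas hρ_meas x).comp measurable_snd)
    exact h.stronglyMeasurable.integral_prod_right'.measurable
  have hgmeas₂ : ∀ x, Measurable fun s : ℝ => ∫ y, v₂ y s * ρ y x := by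
    intro x
    have h : Measurable (uncurry fun (s : ℝ) (y : EuclideanSpace ℝ (Fin d)) =>
        v₂ y s * ρ y x) :=
      (hm₂.comp (measurable_snd.prodMk measurable_fst)).mul
        ((aux_col_meas hρ_meas x).comp measurable_snd)
    exact h.stronglyMeasurable.integral_prod_right'.measurable
  have hgnn₁ : ∀ x, ∀ s ∈ Icc (0:ℝ) T, 0 ≤ ∫ y, v₁ y s * ρ y x := fun x s hs =>
    integral_nonneg fun y => mul_nonneg (hnn₁ y s hs) (hρ_nonneg y x)
  have hgnn₂ : ∀ x, ∀ s ∈ Icc (0:ℝ) T, 0 ≤ ∫ y, v₂ y s * ρ y x := fun x s hs =>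
    integral_nonneg fun y => mul_nonneg (hnn₂ y s hs) (hρ_nonneg y x)
  have hgle₁ : ∀ x, ∀ s ∈ Icc (0:ℝ) T, ∫ y, v₁ y s * ρ y x ≤ C₁ * c := fun x s hs =>
    aux_prod_le hρ_meas hρ_nonneg hρt_int hρt_prob hdom (hvmeas₁ s) (fun y => hnn₁ y s hs)
      (fun y => hb₁ y s hs) x
  have hgle₂ : ∀ x, ∀ s ∈ Icc (0:ℝ) T, ∫ y, v₂ y s * ρ y x ≤ C₂ * c := fun x s hs =>
    aux_prod_le hρ_meas hρ_nonneg hρt_int hρt_prob hdom (hvmeas₂ s) (fun y => hnn₂ y s hs)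
      (fun y => hb₂ y s hs) x
  have hgii : ∀ (v : EuclideanSpace ℝ (Fin d) → ℝ → ℝ) (Cv : ℝ),
      (∀ x, Measurable fun s : ℝ => ∫ y, v y s * ρ y x) →
      (∀ x, ∀ s ∈ Icc (0:ℝ) T, 0 ≤ ∫ y, v y s * ρ y x) →
      (∀ x, ∀ s ∈ Icc (0:ℝ) T, ∫ y, v y s * ρ y x ≤ Cv * c) →
      ∀ x, ∀ t ∈ Icc (0:ℝ) T,
        IntervalIntegrable (fun s => ∫ y, v y s * ρ y x) volume 0 t := by
    intro v Cv hmeas hnn hle x t ht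
    rw [intervalIntegrable_iff_integrableOn_Ioc_of_le ht.1]
    refine Integrable.mono' (g := fun _ => Cv * c)
      (integrableOn_const measure_Ioc_lt_top.ne)
      ((hmeas x).aestronglyMeasurable.restrict) ?_
    filter_upwards [ae_restrict_mem measurableSet_Ioc] with s hs
    have hsIcc : s ∈ Icc (0:ℝ) T := ⟨hs.1.le, hs.2.trans ht.2⟩
    rw [Real.norm_of_nonneg (hnn x s hsIcc)]
    exact hle x s hsIcc
  have hgii₁ := hgii v₁ C₁ hgmeas₁ hgnn₁ hgle₁
  have hgii₂ := hgii v₂ C₂ hgmeas₂ hgnn₂ hgle₂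
  -- the Gronwall-type iteration
  have claim : ∀ n : ℕ, ∀ t ∈ Icc (0:ℝ) T, ∀ x, |v₁ x t - v₂ x t| ≤ M * ((c * t) ^ n / n !) := by
    intro n
    induction n with
    | zero =>
      intro t ht x
      simp only [pow_zero, Nat.factorial_zero, Nat.cast_one, div_one, mul_one]
      rw [abs_sub_le_iff]
      constructor
      · have := hb₁ x t ht; have := hnn₂ x t ht; linarith
      · have := hb₂ x t ht; have := hnn₁ x t ht; linarith
    | succ n ih =>
      intro t ht x
      have ht0 : 0 ≤ t := ht.1
      by_cases hxD : x ∈ D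
      · have hsub : v₁ x t - v₂ x t
            = ∫ s in (0:ℝ)..t, ((∫ y, v₁ y s * ρ y x) - ∫ y, v₂ y s * ρ y x) := by
          rw [heq₁ x hxD t ht, heq₂ x hxD t ht,
            intervalIntegral.integral_sub (hgii₁ x t ht) (hgii₂ x t ht)]
          ring
        rw [hsub, ← Real.norm_eq_abs]
        have hbnd : ∀ s ∈ uIoc (0:ℝ) t,
            ‖(∫ y, v₁ y s * ρ y x) - ∫ y, v₂ y s * ρ y x‖ ≤ M * ((c * s) ^ n / n !) * c := by
          intro s hs
          rw [uIoc_of_le ht0] at hs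
          have hsIcc : s ∈ Icc (0:ℝ) T := ⟨hs.1.le, hs.2.trans ht.2⟩
          have hs0 : 0 ≤ s := hs.1.le
          have hK0 : 0 ≤ M * ((c * s) ^ n / n !) := by positivity
          have hdiff : (∫ y, v₁ y s * ρ y x) - ∫ y, v₂ y s * ρ y x
              = ∫ y, (v₁ y s - v₂ y s) * ρ y x := by
            rw [← integral_sub (hprodint₁ s hsIcc x) (hprodint₂ s hsIcc x)]
            congr 1; funext y; ring
          rw [hdiff]
          calc ‖∫ y, (v₁ y s - v₂ y s) * ρ y x‖ ≤ ∫ y, ‖(v₁ y s - v₂ y s) * ρ y x‖ :=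
                norm_integral_le_integral_norm _
            _ ≤ ∫ y, (M * ((c * s) ^ n / n !)) * ρ y x := by
                have hIn : Integrable (fun y => ‖(v₁ y s - v₂ y s) * ρ y x‖) := by
                  simpa [Pi.sub_apply, sub_mul] using
                    ((hprodint₁ s hsIcc x).sub (hprodint₂ s hsIcc x)).norm
                refine integral_mono hIn
                  ((aux_col_int hρ_meas hρ_nonneg hρt_int hdom x).const_mul _) (fun y => ?_)
                rw [norm_mul, Real.norm_of_nonneg (hρ_nonneg y x)]
                exact mul_le_mul_of_nonneg_right (ih s hsIcc y) (hρ_nonneg y x)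
            _ = (M * ((c * s) ^ n / n !)) * ∫ y, ρ y x := integral_const_mul _ _
            _ ≤ M * ((c * s) ^ n / n !) * c := mul_le_mul_of_nonneg_left
                (aux_col_le hρ_meas hρ_nonneg hρt_int hρt_prob hdom x) hK0
        have hgcont : Continuous fun s : ℝ => M * ((c * s) ^ n / n !) * c :=
          ((continuous_const.mul (((continuous_const.mul continuous_id).pow n).div_const
            _)).mul continuous_const)
        have h1 := intervalIntegral.norm_integral_le_abs_of_norm_le (μ := volume) (a := (0:ℝ))
          (b := t) (f := fun s => (∫ y, v₁ y s * ρ y x) - ∫ y, v₂ y s * ρ y x)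
          (g := fun s => M * ((c * s) ^ n / n !) * c)
          (by filter_upwards [ae_restrict_mem measurableSet_uIoc] with s hs using hbnd s hs)
          (hgcont.intervalIntegrable 0 t)
        have h2 : |∫ s in (0:ℝ)..t, M * ((c * s) ^ n / n !) * c| ≤ M * ((c * t) ^ (n+1) / (n+1)!) := by
          have hval : ∫ s in (0:ℝ)..t, M * ((c * s) ^ n / n !) * c
              = (M * c ^ (n + 1) / n !) * (t ^ (n + 1) / (n + 1)) := by
            have hfn : ∀ s : ℝ, M * ((c * s) ^ n / n !) * c = (M * c ^ (n + 1) / n !) * s ^ n := by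
              intro s; rw [mul_pow]; ring
            simp only [hfn]
            rw [intervalIntegral.integral_const_mul, integral_pow]
            rw [zero_pow (Nat.succ_ne_zero n)]
            ring
          rw [hval]
          have hfact : ((n + 1)! : ℝ) = (n + 1) * (n !) := by
            push_cast [Nat.factorial_succ]; ring
          have habs : 0 ≤ (M * c ^ (n + 1) / n !) * (t ^ (n + 1) / (n + 1)) :=
            mul_nonneg (div_nonneg (mul_nonneg hM0 (pow_nonneg hc0 _)) (Nat.cast_nonneg _))
              (div_nonneg (pow_nonneg ht0 _) (by positivity))
          rw [abs_of_nonneg habs, mul_pow, hfact]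
          apply le_of_eq
          have hfne : ((n !) : ℝ) ≠ 0 := by positivity
          have hnne : ((n : ℝ) + 1) ≠ 0 := by positivity
          field_simp
        calc ‖∫ s in (0:ℝ)..t, ((∫ y, v₁ y s * ρ y x) - ∫ y, v₂ y s * ρ y x)‖
            ≤ |∫ s in (0:ℝ)..t, M * ((c * s) ^ n / n !) * c| := h1
          _ ≤ M * ((c * t) ^ (n+1) / (n+1)!) := h2
      · rw [hvan₁ x hxD t ht, hvan₂ x hxD t ht]
        simp only [sub_zero, abs_zero]
        positivity
  intro x t ht
  have hten : Filter.Tendsto (fun n : ℕ => M * ((c * t) ^ n / n !)) Filter.atTop (nhds 0) := by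
    have h := (Real.summable_pow_div_factorial (c * t)).tendsto_atTop_zero
    simpa using h.const_mul M
  have hle0 : |v₁ x t - v₂ x t| ≤ 0 := ge_of_tendsto' hten (fun n => claim n t ht x)
  have h2 : |v₁ x t - v₂ x t| = 0 := le_antisymm hle0 (abs_nonneg _)
  rwa [abs_eq_zero, sub_eq_zero] at h2

/-- Well-posedness of the linear nonlocal growth equation on a fixed domain `D`
with absorption outside `D`: existence and uniqueness (on `ℝ^d × [0,T]`). -/
theorem nonlocal_growth_wellposed {d : ℕ} (T : ℝ) (hT : 0 < T)
    (D : Set (EuclideanSpace ℝ (Fin d))) (hD : MeasurableSet D)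
    (ρ : EuclideanSpace ℝ (Fin d) → EuclideanSpace ℝ (Fin d) → ℝ)
    (hρ_meas : Measurable (Function.uncurry ρ))
    (hρ_nonneg : ∀ x y, 0 ≤ ρ x y) (hρ_int : ∀ x, Integrable (ρ x))
    (hρ_prob : ∀ x, ∫ y, ρ x y = 1)
    (ρt : EuclideanSpace ℝ (Fin d) → ℝ) (c : ℝ)
    (hρt_nonneg : ∀ z, 0 ≤ ρt z) (hρt_int : Integrable ρt) (hρt_prob : ∫ z, ρt z = 1)
    (hdom : ∀ x y, ρ x y ≤ c * ρt (y - x))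
    (w₀ : EuclideanSpace ℝ (Fin d) → ℝ) (hw₀_meas : Measurable w₀)
    (hw₀_nonneg : ∀ x, 0 ≤ w₀ x) (hw₀_bdd : ∃ C : ℝ, ∀ x, w₀ x ≤ C)
    (hw₀_int : Integrable w₀) (hw₀_vanish : ∀ x ∉ D, w₀ x = 0) :
    ∃ u : EuclideanSpace ℝ (Fin d) → ℝ → ℝ,
      IsNonlocalGrowthSolution T D ρ w₀ u ∧
      ∀ u' : EuclideanSpace ℝ (Fin d) → ℝ → ℝ, IsNonlocalGrowthSolution T D ρ w₀ u' →
        ∀ x, ∀ t ∈ Icc (0:ℝ) T, u x t = u' x t := by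
  obtain ⟨C, hC⟩ := hw₀_bdd
  set C₀ : ℝ := max C 0 with hC₀def
  have hC₀0 : 0 ≤ C₀ := le_max_right _ _
  have hC₀ : ∀ x, w₀ x ≤ C₀ := fun x => (hC x).trans (le_max_left _ _)
  have hc1 : (1:ℝ) ≤ c := by
    have h2 : ∫ y, ρ 0 y ≤ ∫ y, c * ρt y := by
      apply integral_mono (hρ_int 0) (hρt_int.const_mul c)
      intro y
      simpa using hdom 0 y
    rwa [hρ_prob 0, integral_const_mul, hρt_prob, mul_one] at h2
  have hc0 : (0:ℝ) ≤ c := zero_le_one.trans hc1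
  have hwvan : ∀ n x, x ∉ D → nlgIter D ρ w₀ n x = 0 := by
    intro n x hx
    cases n with
    | zero => exact hw₀_vanish x hx
    | succ n => exact Set.indicator_of_notMem hx _
  have hwsucc : ∀ n x, x ∈ D →
      nlgIter D ρ w₀ (n+1) x = ∫ y, nlgIter D ρ w₀ n y * ρ y x := by
    intro n x hx
    exact Set.indicator_of_mem hx _
  have hw0 : nlgIter D ρ w₀ 0 = w₀ := rfl
  set w := nlgIter D ρ w₀ with hwdef
  have hw := nlgIter_props hD hρ_meas hρ_nonneg hρ_int hρ_prob hρt_int hρt_prob hdom hc0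
    hw₀_meas hw₀_nonneg hw₀_int hC₀0 hC₀
  have hwmeas : ∀ n, Measurable (w n) := fun n => (hw n).1
  have hwnn : ∀ n x, 0 ≤ w n x := fun n => (hw n).2.1
  have hwle : ∀ n x, w n x ≤ C₀ * c ^ n := fun n => (hw n).2.2.1
  have hwint : ∀ n, Integrable (w n) := fun n => (hw n).2.2.2.1
  have hwI : ∀ n, ∫ x, w n x ≤ ∫ x, w₀ x := fun n => (hw n).2.2.2.2
  have hI0 : 0 ≤ ∫ x, w₀ x := integral_nonneg hw₀_nonneg
  -- summability of the series defining the solution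
  have hsummable : ∀ (x : EuclideanSpace ℝ (Fin d)) (t : ℝ),
      Summable fun n : ℕ => w n x * ((max t 0) ^ n / (n ! : ℝ)) := by
    intro x t
    have hm0 : (0:ℝ) ≤ max t 0 := le_max_right _ _
    refine Summable.of_nonneg_of_le
      (fun n => mul_nonneg (hwnn n x) (by positivity)) (fun n => ?_)
      ((Real.summable_pow_div_factorial (c * max t 0)).mul_left C₀)
    calc w n x * ((max t 0) ^ n / (n ! : ℝ))
        ≤ (C₀ * c ^ n) * ((max t 0) ^ n / (n ! : ℝ)) :=
          mul_le_mul_of_nonneg_right (hwle n x) (by positivity)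
      _ = C₀ * ((c * max t 0) ^ n / (n ! : ℝ)) := by rw [mul_pow]; ring
  -- the candidate solution
  have hsol : IsNonlocalGrowthSolution T D ρ w₀
      (fun x t => ∑' n : ℕ, w n x * ((max t 0) ^ n / (n ! : ℝ))) := by
    refine ⟨?_, ?_, ?_, ?_, ?_, ?_⟩
    · -- measurability
      show Measurable fun p : EuclideanSpace ℝ (Fin d) × ℝ =>
        ∑' n : ℕ, w n p.1 * ((max p.2 0) ^ n / (n ! : ℝ))
      refine aux_measurable_tsum (fun n => ?_) (fun n p =>
        mul_nonneg (hwnn n p.1) (by positivity))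
      exact ((hwmeas n).comp measurable_fst).mul
        (((measurable_snd.max measurable_const).pow_const n).div_const _)
    · -- nonnegativity
      intro x t _
      exact tsum_nonneg fun n => mul_nonneg (hwnn n x) (by positivity)
    · -- boundedness
      refine ⟨∑' n : ℕ, C₀ * ((c * T) ^ n / (n ! : ℝ)), fun x t ht => ?_⟩
      have hm0 : (0:ℝ) ≤ max t 0 := le_max_right _ _
      have hmT : max t 0 ≤ T := max_le ht.2 hT.le
      calc ∑' n : ℕ, w n x * ((max t 0) ^ n / (n ! : ℝ))
          ≤ ∑' n : ℕ, C₀ * ((c * max t 0) ^ n / (n ! : ℝ)) := by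
            refine Summable.tsum_le_tsum (fun n => ?_) (hsummable x t)
              ((Real.summable_pow_div_factorial (c * max t 0)).mul_left C₀)
            calc w n x * ((max t 0) ^ n / (n ! : ℝ))
                ≤ (C₀ * c ^ n) * ((max t 0) ^ n / (n ! : ℝ)) :=
                  mul_le_mul_of_nonneg_right (hwle n x) (by positivity)
              _ = C₀ * ((c * max t 0) ^ n / (n ! : ℝ)) := by rw [mul_pow]; ring
        _ ≤ ∑' n : ℕ, C₀ * ((c * T) ^ n / (n ! : ℝ)) := by
            refine Summable.tsum_le_tsum (fun n => ?_)
              ((Real.summable_pow_div_factorial (c * max t 0)).mul_left C₀)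
              ((Real.summable_pow_div_factorial (c * T)).mul_left C₀)
            refine mul_le_mul_of_nonneg_left ?_ hC₀0
            refine div_le_div_of_nonneg_right ?_ (by positivity)
            exact pow_le_pow_left₀ (by positivity) (mul_le_mul_of_nonneg_left hmT hc0) n
    · -- integrability in x
      intro t _
      show Integrable fun x => ∑' n : ℕ, w n x * ((max t 0) ^ n / (n ! : ℝ))
      have hm0 : (0:ℝ) ≤ max t 0 := le_max_right _ _
      refine aux_integrable_tsum (fun n => (hwmeas n).mul_const _)
        (fun n x => mul_nonneg (hwnn n x) (by positivity))
        (fun n => (hwint n).mul_const _) ?_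
      simp_rw [integral_mul_const]
      refine Summable.of_nonneg_of_le
        (fun n => mul_nonneg (integral_nonneg (hwnn n)) (by positivity)) (fun n => ?_)
        ((Real.summable_pow_div_factorial (max t 0)).mul_left (∫ x, w₀ x))
      exact mul_le_mul_of_nonneg_right (hwI n) (by positivity)
    · -- vanishing outside D
      intro x hx t _
      show (∑' n : ℕ, w n x * ((max t 0) ^ n / (n ! : ℝ))) = 0
      calc (∑' n : ℕ, w n x * ((max t 0) ^ n / (n ! : ℝ))) = ∑' _ : ℕ, (0:ℝ) := by
            congr 1; funext n; rw [hwvan n x hx, zero_mul]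
        _ = 0 := tsum_zero
    · -- the integral equation on D
      intro x hx t ht
      obtain ⟨ht0, htT⟩ := ht
      have hmax : max t 0 = t := max_eq_left ht0
      have hinner : ∀ s : ℝ,
          ∫ y, (∑' n : ℕ, w n y * ((max s 0) ^ n / (n ! : ℝ))) * ρ y x
            = ∑' n : ℕ, w (n+1) x * ((max s 0) ^ n / (n ! : ℝ)) := by
        intro s
        have hm0' : (0:ℝ) ≤ max s 0 := le_max_right _ _
        set m := max s 0 with hmdef
        have hfnn : ∀ (n : ℕ) y, 0 ≤ w n y * (m ^ n / (n ! : ℝ)) := fun n y =>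
          mul_nonneg (hwnn n y) (by positivity)
        have hfle : ∀ (n : ℕ) y, w n y * (m ^ n / (n ! : ℝ))
            ≤ (C₀ * c ^ n) * (m ^ n / (n ! : ℝ)) := fun n y =>
          mul_le_mul_of_nonneg_right (hwle n y) (by positivity)
        have hFint : ∀ n : ℕ, Integrable fun y => (w n y * (m ^ n / (n ! : ℝ))) * ρ y x :=
          fun n => aux_prod_int hρ_meas hρ_nonneg hρt_int hdom ((hwmeas n).mul_const _)
            (hfnn n) (hfle n) x
        have hFsum : Summable fun n : ℕ =>
            ∫ y, ‖(w n y * (m ^ n / (n ! : ℝ))) * ρ y x‖ := by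
          refine Summable.of_nonneg_of_le (fun n => integral_nonneg fun y => norm_nonneg _)
            (fun n => ?_) ((Real.summable_pow_div_factorial (c * m)).mul_left (C₀ * c))
          have hnorm : ∀ y, ‖(w n y * (m ^ n / (n ! : ℝ))) * ρ y x‖
              = (w n y * (m ^ n / (n ! : ℝ))) * ρ y x := fun y =>
            Real.norm_of_nonneg (mul_nonneg (hfnn n y) (hρ_nonneg y x))
          calc ∫ y, ‖(w n y * (m ^ n / (n ! : ℝ))) * ρ y x‖
              = ∫ y, (w n y * (m ^ n / (n ! : ℝ))) * ρ y x := by simp_rw [hnorm]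
            _ ≤ ((C₀ * c ^ n) * (m ^ n / (n ! : ℝ))) * c :=
                aux_prod_le hρ_meas hρ_nonneg hρt_int hρt_prob hdom
                  ((hwmeas n).mul_const _) (hfnn n) (hfle n) x
            _ = (C₀ * c) * ((c * m) ^ n / (n ! : ℝ)) := by rw [mul_pow]; ring
        calc ∫ y, (∑' n : ℕ, w n y * (m ^ n / (n ! : ℝ))) * ρ y x
            = ∫ y, ∑' n : ℕ, (w n y * (m ^ n / (n ! : ℝ))) * ρ y x := by
              congr 1; funext y; exact (tsum_mul_right).symm
          _ = ∑' n : ℕ, ∫ y, (w n y * (m ^ n / (n ! : ℝ))) * ρ y x :=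
              (integral_tsum_of_summable_integral_norm hFint hFsum).symm
          _ = ∑' n : ℕ, w (n+1) x * (m ^ n / (n ! : ℝ)) := by
              congr 1; funext n
              calc ∫ y, (w n y * (m ^ n / (n ! : ℝ))) * ρ y x
                  = ∫ y, (m ^ n / (n ! : ℝ)) * (w n y * ρ y x) := by
                    congr 1; funext y; ring
                _ = (m ^ n / (n ! : ℝ)) * ∫ y, w n y * ρ y x := integral_const_mul _ _
                _ = w (n+1) x * (m ^ n / (n ! : ℝ)) := by rw [← hwsucc n x hx]; ring
      have houter : (∫ s in (0:ℝ)..t, ∑' n : ℕ, w (n+1) x * ((max s 0) ^ n / (n ! : ℝ)))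
          = ∑' n : ℕ, w (n+1) x * (t ^ (n+1) / ((n+1)! : ℝ)) := by
        rw [intervalIntegral.integral_of_le ht0]
        have hGcont : ∀ n : ℕ, Continuous fun s : ℝ =>
            w (n+1) x * ((max s 0) ^ n / (n ! : ℝ)) := fun n =>
          continuous_const.mul (((continuous_id.max continuous_const).pow n).div_const _)
        have hGint : ∀ n : ℕ, Integrable (fun s => w (n+1) x * ((max s 0) ^ n / (n ! : ℝ)))
            (volume.restrict (Ioc 0 t)) := fun n => (hGcont n).integrableOn_Ioc
        have hGsum : Summable fun n : ℕ =>
            ∫ s in Ioc (0:ℝ) t, ‖w (n+1) x * ((max s 0) ^ n / (n ! : ℝ))‖ := by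
          refine Summable.of_nonneg_of_le (fun n => integral_nonneg fun s => norm_nonneg _)
            (fun n => ?_) ((Real.summable_pow_div_factorial (c * t)).mul_left (C₀ * c * t))
          have hptle : ∀ s ∈ Ioc (0:ℝ) t, ‖w (n+1) x * ((max s 0) ^ n / (n ! : ℝ))‖
              ≤ (C₀ * c ^ (n+1)) * (t ^ n / (n ! : ℝ)) := by
            intro s hs
            rw [Real.norm_of_nonneg (mul_nonneg (hwnn _ x) (by positivity))]
            have h1 : (max s 0) ^ n ≤ t ^ n := by
              rw [max_eq_left hs.1.le]
              exact pow_le_pow_left₀ hs.1.le hs.2 n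
            calc w (n+1) x * ((max s 0) ^ n / (n ! : ℝ))
                ≤ (C₀ * c ^ (n+1)) * ((max s 0) ^ n / (n ! : ℝ)) :=
                  mul_le_mul_of_nonneg_right (hwle (n+1) x) (by positivity)
              _ ≤ (C₀ * c ^ (n+1)) * (t ^ n / (n ! : ℝ)) := by
                  refine mul_le_mul_of_nonneg_left ?_ (by positivity)
                  exact div_le_div_of_nonneg_right h1 (by positivity)
          calc ∫ s in Ioc (0:ℝ) t, ‖w (n+1) x * ((max s 0) ^ n / (n ! : ℝ))‖
              ≤ ∫ _ in Ioc (0:ℝ) t, (C₀ * c ^ (n+1)) * (t ^ n / (n ! : ℝ)) :=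
                setIntegral_mono_on (hGint n).norm
                  (integrableOn_const measure_Ioc_lt_top.ne) measurableSet_Ioc hptle
            _ = (C₀ * c * t) * ((c * t) ^ n / (n ! : ℝ)) := by
                rw [setIntegral_const, measureReal_def, Real.volume_Ioc, smul_eq_mul,
                  ENNReal.toReal_ofReal (by linarith)]
                rw [mul_pow]
                ring
        rw [← integral_tsum_of_summable_integral_norm hGint hGsum]
        congr 1; funext n
        calc ∫ s in Ioc (0:ℝ) t, w (n+1) x * ((max s 0) ^ n / (n ! : ℝ))
            = ∫ s in Ioc (0:ℝ) t, w (n+1) x * (s ^ n / (n ! : ℝ)) := by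
              refine setIntegral_congr_fun measurableSet_Ioc (fun s hs => ?_)
              rw [max_eq_left hs.1.le]
          _ = ∫ s in (0:ℝ)..t, (w (n+1) x / (n ! : ℝ)) * s ^ n := by
              rw [intervalIntegral.integral_of_le ht0]
              congr 1; funext s; ring
          _ = (w (n+1) x / (n ! : ℝ)) * ((t ^ (n+1) - 0 ^ (n+1)) / ((n:ℝ)+1)) := by
              rw [intervalIntegral.integral_const_mul, integral_pow]
          _ = w (n+1) x * (t ^ (n+1) / ((n+1)! : ℝ)) := by
              rw [zero_pow (Nat.succ_ne_zero n), sub_zero]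
              have hfact : (((n+1)! : ℕ) : ℝ) = ((n:ℝ)+1) * (n ! : ℝ) := by
                push_cast [Nat.factorial_succ]
                ring
              rw [hfact, div_mul_div_comm, mul_div_assoc,
                mul_comm ((n ! : ℕ) : ℝ) ((n:ℝ)+1)]
      have hfinal : (∑' n : ℕ, w n x * ((max t 0) ^ n / (n ! : ℝ)))
          = w₀ x + ∑' n : ℕ, w (n+1) x * (t ^ (n+1) / ((n+1)! : ℝ)) := by
        rw [Summable.tsum_eq_zero_add (hsummable x t)]
        congr 1
        · rw [← hw0, hwdef]
          simp
        · congr 1; funext n; rw [hmax]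
      show (∑' n : ℕ, w n x * ((max t 0) ^ n / (n ! : ℝ)))
        = w₀ x + ∫ s in (0:ℝ)..t,
            ∫ y, (∑' n : ℕ, w n y * ((max s 0) ^ n / (n ! : ℝ))) * ρ y x
      simp_rw [hinner]
      rw [houter, hfinal]
  exact ⟨_, hsol, fun u' hu' => aux_unique hT hρ_meas hρ_nonneg hρt_int hρt_prob hdom hc0
    _ u' hsol hu'⟩
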